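/- Let G be a subgroup of the multiplicative group of positive real numbers such that every element of G is a root of a monic quadratic t^2 - a t + 1 with a ∈ Z, and G ≠ {1}. Then G is infinite cyclic: G ≅ Z. -/

import Mathlib

noncomputable section

instance posRealMulArchimedean : MulArchimedean {x : ℝ // 0 < x} := by
  constructor
  intro x y hy
  have hy' : (1 : ℝ) < (y : ℝ) := hy
  obtain ⟨n, hn⟩ := pow_unbounded_of_one_lt (x : ℝ) hy'
  refine ⟨n, ?_⟩
  have : (x : ℝ) ≤ (y : ℝ) ^ n := hn.le
  exact_mod_cast this

theorem subgroup_of_quadratic_units_is_infinite_cyclic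
    (G : Subgroup {x : ℝ // 0 < x})
    (hquad : ∀ g ∈ G, ∃ a : ℤ, ((g : ℝ)) ^ 2 - (a : ℝ) * (g : ℝ) + 1 = 0)
    (hne : G ≠ ⊥) :
    Nonempty (G ≃* Multiplicative ℤ) := by
  have h2 : (0 : ℝ) < 2 := by norm_num
  have h₀ : (1 : {x : ℝ // 0 < x}) < ⟨2, h2⟩ := by
    rw [← Subtype.coe_lt_coe]; norm_num
  have hd : Disjoint (G : Set {x : ℝ // 0 < x}) (Set.Ioo 1 ⟨2, h2⟩) := by
    rw [Set.disjoint_left]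
    rintro g hg ⟨hg1, hg2⟩
    obtain ⟨a, ha⟩ := hquad g hg
    have hg1' : (1 : ℝ) < (g : ℝ) := hg1
    have hg2' : (g : ℝ) < 2 := hg2
    have hlt : (2 : ℝ) * (g : ℝ) < (a : ℝ) * (g : ℝ) := by nlinarith
    have hgt : (a : ℝ) * (g : ℝ) < 3 * (g : ℝ) := by nlinarith
    have hgpos : (0 : ℝ) < (g : ℝ) := g.2
    have h2a : (2 : ℝ) < (a : ℝ) := by
      have := (mul_lt_mul_iff_of_pos_right hgpos).mp hlt; linarith
    have ha3 : (a : ℝ) < 3 := by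
      have := (mul_lt_mul_iff_of_pos_right hgpos).mp hgt; linarith
    have h2a' : (2 : ℤ) < a := by exact_mod_cast h2a
    have ha3' : a < (3 : ℤ) := by exact_mod_cast ha3
    omega
  obtain ⟨b, hb⟩ := Subgroup.exists_isLeast_one_lt hne h₀ hd
  have hbG : b ∈ G := hb.1.1
  have hlst : IsLeast {y : G | 1 < y} ⟨b, hbG⟩ := by
    constructor
    · exact hb.1.2
    · rintro ⟨y, hyG⟩ hy
      exact hb.2 ⟨hyG, hy⟩
  exact ⟨(LinearOrderedCommGroup.multiplicative_int_orderMonoidIso_of_isLeast_one_lt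
    hlst).toMulEquiv⟩

end
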